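/- arXiv:2502.05060 — 4 statements merged into one kernel-verified Lean document; each statement's English description precedes it below -/
import Mathlib

section
/- For any probability vector (p_i)_{i∈R} with p_i > 0 for all i and Σ_i p_i < 1, there exists a unique compensation vector c : R → ℝ such that the MNL probabilities induced by c equal (p_i)_{i∈R}; it is given by c_i = −u_i + u_0 + μ·ln(p_i) − μ·ln(1 − Σ_l p_l). -/
open Real Finset

/-- for any strictly positive (p_i) with ∑ p_i < 1, there is a unique
    compensation vector inducing those MNL probabilities, given by
    c_i = −u_i + u_0 + μ ln p_i − μ ln (1 − ∑ p). -/
theorem mnl_surjective_onto_open_simplex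
    {ι : Type*} [Fintype ι]
    (u : ι → ℝ) (u0 : ℝ) (μ : ℝ) (hμ : 0 < μ)
    (P : (ι → ℝ) → ι → ℝ)
    (hP : ∀ c i, P c i = Real.exp ((u i + c i) / μ) /
      ((∑ l, Real.exp ((u l + c l) / μ)) + Real.exp (u0 / μ)))
    (p : ι → ℝ) (hp : ∀ i, 0 < p i) (hps : ∑ i, p i < 1) :
    (∀ i, P (fun i => -u i + u0 + μ * Real.log (p i)
        - μ * Real.log (1 - ∑ l, p l)) i = p i) ∧
    ∀ c : ι → ℝ, (∀ i, P c i = p i) →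
      c = fun i => -u i + u0 + μ * Real.log (p i) - μ * Real.log (1 - ∑ l, p l) := by
  have hμ' : μ ≠ 0 := ne_of_gt hμ
  have hS1 : 0 < 1 - ∑ l, p l := by linarith
  have hkey : ∀ i, Real.exp ((u i + (-u i + u0 + μ * Real.log (p i)
      - μ * Real.log (1 - ∑ l, p l))) / μ)
      = Real.exp (u0 / μ) * p i / (1 - ∑ l, p l) := by
    intro i
    have h1 : (u i + (-u i + u0 + μ * Real.log (p i) - μ * Real.log (1 - ∑ l, p l))) / μ
        = u0 / μ + Real.log (p i) - Real.log (1 - ∑ l, p l) := by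
      field_simp; ring
    rw [h1, Real.exp_sub, Real.exp_add, Real.exp_log (hp i), Real.exp_log hS1]
  constructor
  · intro i
    rw [hP]
    simp only [hkey]
    rw [← Finset.sum_div, ← Finset.mul_sum]
    have hE : Real.exp (u0 / μ) ≠ 0 := Real.exp_ne_zero _
    field_simp
    ring
  · intro c hc
    funext i
    set D : ℝ := (∑ l, Real.exp ((u l + c l) / μ)) + Real.exp (u0 / μ) with hDdef
    have hDpos : 0 < D := by
      have : 0 ≤ ∑ l, Real.exp ((u l + c l) / μ) :=
        Finset.sum_nonneg fun l _ => (Real.exp_pos _).le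
      have := Real.exp_pos (u0 / μ)
      rw [hDdef]; linarith
    have hEi : ∀ j, Real.exp ((u j + c j) / μ) = p j * D := by
      intro j
      have h := hc j
      rw [hP] at h
      field_simp [ne_of_gt hDpos] at h
      linarith [h]
    have hsum : (∑ l, Real.exp ((u l + c l) / μ)) = (∑ l, p l) * D := by
      rw [Finset.sum_mul]
      exact Finset.sum_congr rfl fun l _ => hEi l
    have hDval : D = Real.exp (u0 / μ) / (1 - ∑ l, p l) := by
      have h0 : D = (∑ l, p l) * D + Real.exp (u0 / μ) := by nth_rewrite 1 [hDdef]; rw [hsum]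
      have h1 : D * (1 - ∑ l, p l) = Real.exp (u0 / μ) := by linear_combination h0
      rw [eq_div_iff (ne_of_gt hS1)]
      exact h1
    have hlog : (u i + c i) / μ = Real.log (p i) + u0 / μ - Real.log (1 - ∑ l, p l) := by
      have := hEi i
      rw [hDval] at this
      have h2 : (u i + c i) / μ = Real.log (p i * (Real.exp (u0 / μ) / (1 - ∑ l, p l))) := by
        rw [← this, Real.log_exp]
      rw [h2, Real.log_mul (ne_of_gt (hp i)), Real.log_div (Real.exp_ne_zero _) (ne_of_gt hS1),
        Real.log_exp]
      · ring
      · positivity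
    have : u i + c i = μ * (Real.log (p i) + u0 / μ - Real.log (1 - ∑ l, p l)) := by
      field_simp at hlog ⊢
      linarith
    field_simp at this
    linarith
end

section
/- Concavity of the expected-profit objective in probability space: the function φ(p) = Σ_{i∈R} p_i·(a_i − μ·ln(p_i)) + μ·(Σ_{i∈R} p_i)·ln(1 − Σ_{i∈R} p_i), defined on the open simplex {p : R → ℝ | p_i > 0 for all i, Σ_i p_i < 1}, is concave in p, for any constants a : R → ℝ and μ > 0. -/
open Real Finset

section Aux

variable {ι : Type*} [Fintype ι]

/-- The linear map sending `p` to `∑ i, p i`. -/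
noncomputable def sumLM (ι : Type*) [Fintype ι] : (ι → ℝ) →ₗ[ℝ] ℝ where
  toFun p := ∑ i, p i
  map_add' p q := by simp [Finset.sum_add_distrib]
  map_smul' c p := by simp [Finset.mul_sum]

/-- The affine map sending `p` to `1 - ∑ i, p i`. -/
noncomputable def oneSubSumAM (ι : Type*) [Fintype ι] : (ι → ℝ) →ᵃ[ℝ] ℝ where
  toFun p := 1 - ∑ i, p i
  linear := -sumLM ι
  map_vadd' p v := by
    simp [sumLM, Finset.sum_add_distrib]; ring

end Aux

/-- concavity of the expected-profit objective in probability space. -/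
theorem phi_concave_on_open_simplex
    {ι : Type*} [Fintype ι] [Nonempty ι]
    (a : ι → ℝ) (μ : ℝ) (hμ : 0 < μ) :
    ConcaveOn ℝ {p : ι → ℝ | (∀ i, 0 < p i) ∧ ∑ i, p i < 1}
      (fun p => (∑ i, p i * (a i - μ * Real.log (p i)))
        + μ * (∑ i, p i) * Real.log (1 - ∑ i, p i)) := by
  set D : Set (ι → ℝ) := {p : ι → ℝ | (∀ i, 0 < p i) ∧ ∑ i, p i < 1} with hDdef
  have hsumlin : IsLinearMap ℝ (fun p : ι → ℝ => ∑ i, p i) :=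
    ⟨fun p q => by simp [Finset.sum_add_distrib], fun c p => by simp [Finset.mul_sum]⟩
  have hD : Convex ℝ D := by
    have h1 : Convex ℝ {p : ι → ℝ | ∀ i, 0 < p i} := by
      have : {p : ι → ℝ | ∀ i, 0 < p i} = ⋂ i, {p : ι → ℝ | 0 < p i} := by
        ext p; simp [Set.mem_iInter]
      rw [this]
      exact convex_iInter fun i =>
        convex_halfSpace_gt ⟨fun p q => rfl, fun c p => rfl⟩ 0
    have h2 : Convex ℝ {p : ι → ℝ | ∑ i, p i < 1} :=
      convex_halfSpace_lt hsumlin 1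
    exact h1.inter h2
  -- linear part
  have hlin : ConcaveOn ℝ D (fun p : ι → ℝ => ∑ i, p i * a i) := by
    refine ⟨hD, fun p _ q _ s t hs ht hst => ?_⟩
    have : (∑ i, (s • p + t • q) i * a i)
        = s * (∑ i, p i * a i) + t * (∑ i, q i * a i) := by
      simp only [Pi.add_apply, Pi.smul_apply, smul_eq_mul, Finset.mul_sum,
        ← Finset.sum_add_distrib]
      exact Finset.sum_congr rfl fun i _ => by ring
    simp only [smul_eq_mul]
    exact le_of_eq this.symm
  -- entropy terms, each coordinate
  have hent : ∀ i : ι, ConcaveOn ℝ D (fun p : ι → ℝ => Real.negMulLog (p i)) := by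
    intro i
    have hcomp := (Real.concaveOn_negMulLog).comp_affineMap
      ((LinearMap.proj i : (ι → ℝ) →ₗ[ℝ] ℝ).toAffineMap)
    refine hcomp.subset (fun p hp => ?_) hD
    exact le_of_lt (hp.1 i)
  -- sum of entropy terms
  have hentsum : ConcaveOn ℝ D (fun p : ι → ℝ => ∑ i, Real.negMulLog (p i)) := by
    have : (fun p : ι → ℝ => ∑ i, Real.negMulLog (p i))
        = ∑ i : ι, (fun p : ι → ℝ => Real.negMulLog (p i)) := by
      funext p; simp
    rw [this]
    exact Finset.sum_induction _ (ConcaveOn ℝ D)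
      (fun f g hf hg => hf.add hg)
      ⟨hD, fun p _ q _ s t hs ht hst => by simp [← add_mul, hst]⟩
      (fun i _ => hent i)
  -- membership of 1 - sum in the relevant sets
  have hmem : ∀ p ∈ D, (0 : ℝ) < 1 - ∑ i, p i := fun p hp => by linarith [hp.2]
  -- log(1 - S)
  have hlog : ConcaveOn ℝ D (fun p : ι → ℝ => Real.log (1 - ∑ i, p i)) := by
    have hcomp := strictConcaveOn_log_Ioi.concaveOn.comp_affineMap (oneSubSumAM ι)
    exact hcomp.subset (fun p hp => hmem p hp) hD
  -- negMulLog(1 - S)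
  have hnml : ConcaveOn ℝ D (fun p : ι → ℝ => Real.negMulLog (1 - ∑ i, p i)) := by
    have hcomp := (Real.concaveOn_negMulLog).comp_affineMap (oneSubSumAM ι)
    exact hcomp.subset (fun p hp => le_of_lt (hmem p hp)) hD
  have hsum : ConcaveOn ℝ D (fun p : ι → ℝ =>
      (∑ i, p i * a i) + μ * ((∑ i, Real.negMulLog (p i))
        + (Real.log (1 - ∑ i, p i) + Real.negMulLog (1 - ∑ i, p i)))) := by
    have h := hlin.add (((hentsum.add (hlog.add hnml))).smul hμ.le)
    have hfe : ((fun p : ι → ℝ => ∑ i, p i * a i)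
        + μ • (fun p : ι → ℝ => (∑ i, Real.negMulLog (p i))
          + (Real.log (1 - ∑ i, p i) + Real.negMulLog (1 - ∑ i, p i))))
        = (fun p : ι → ℝ => (∑ i, p i * a i) + μ * ((∑ i, Real.negMulLog (p i))
          + (Real.log (1 - ∑ i, p i) + Real.negMulLog (1 - ∑ i, p i)))) := by
      funext p; simp [smul_eq_mul]
    rw [← hfe]; exact h
  have heq : (fun p : ι → ℝ => (∑ i, p i * (a i - μ * Real.log (p i)))
        + μ * (∑ i, p i) * Real.log (1 - ∑ i, p i))
      = (fun p : ι → ℝ =>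
      (∑ i, p i * a i) + μ * ((∑ i, Real.negMulLog (p i))
        + (Real.log (1 - ∑ i, p i) + Real.negMulLog (1 - ∑ i, p i)))) := by
    funext p
    have h1 : ∑ i, p i * (a i - μ * Real.log (p i))
        = (∑ i, p i * a i) - μ * ∑ i, p i * Real.log (p i) := by
      rw [Finset.mul_sum, ← Finset.sum_sub_distrib]
      exact Finset.sum_congr rfl fun i _ => by ring
    have h2 : ∑ i, Real.negMulLog (p i) = -∑ i, p i * Real.log (p i) := by
      simp [Real.negMulLog]
    rw [h1, h2, Real.negMulLog]
    ring
  rw [heq]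
  exact hsum
end

section
/- Structure of the optimal compensation: if m solves (m/μ − 1)·exp(m/μ − 1) = Σ_{i∈R} exp((a_i − μ)/μ) with m ≥ μ, and we set c_i = a_i + u_0 − u_i − m (i.e., c_i = r_i − β_i·1[expire] − Δ_i − m), then the induced MNL probabilities p_i = exp((u_i + c_i − u_0)/μ)·p_∅ satisfy the first-order optimality condition of φ; in particular p_i/p_∅ = exp((a_i − m)/μ) and Σ_i p_i/p_∅ = m/μ − 1. -/
open Real Finset

/-- structure of the optimal compensation: with m solving the
    fixed-point equation and c_i = a_i + u_0 − u_i − m, the induced MNL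
    probabilities satisfy p_i/p_∅ = exp((a_i − m)/μ), Σ p_i/p_∅ = m/μ − 1,
    and the first-order optimality condition of φ. -/
theorem optimal_compensation_structure
    {ι : Type*} [Fintype ι] [Nonempty ι]
    (a u : ι → ℝ) (u0 : ℝ) (μ : ℝ) (hμ : 0 < μ)
    (m : ℝ) (hm : μ ≤ m)
    (hfix : (m / μ - 1) * Real.exp (m / μ - 1) = ∑ i, Real.exp ((a i - μ) / μ))
    (c : ι → ℝ) (hc : ∀ i, c i = a i + u0 - u i - m)
    (p : ι → ℝ) (p0 : ℝ)
    (hp : ∀ i, p i = Real.exp ((u i + c i) / μ) /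
      ((∑ l, Real.exp ((u l + c l) / μ)) + Real.exp (u0 / μ)))
    (hp0 : p0 = Real.exp (u0 / μ) /
      ((∑ l, Real.exp ((u l + c l) / μ)) + Real.exp (u0 / μ))) :
    (∀ i, p i / p0 = Real.exp ((a i - m) / μ)) ∧
    (∑ i, p i) / p0 = m / μ - 1 ∧
    (∀ i, a i - μ * Real.log (p i) - μ + μ * Real.log (1 - ∑ l, p l)
      - μ * (∑ l, p l) / (1 - ∑ l, p l) = 0) := by
  set D : ℝ := (∑ l, Real.exp ((u l + c l) / μ)) + Real.exp (u0 / μ) with hD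
  have hDpos : 0 < D := by
    apply add_pos_of_nonneg_of_pos
    · exact Finset.sum_nonneg fun l _ => (Real.exp_pos _).le
    · exact Real.exp_pos _
  have hμne : μ ≠ 0 := ne_of_gt hμ
  have hkey : ∀ i, Real.exp ((u i + c i) / μ)
      = Real.exp (u0 / μ) * Real.exp ((a i - m) / μ) := by
    intro i
    rw [← Real.exp_add]
    congr 1
    rw [hc i]
    field_simp
    ring
  have hp0pos : 0 < p0 := by
    rw [hp0]; exact div_pos (Real.exp_pos _) hDpos
  have hratio : ∀ i, p i / p0 = Real.exp ((a i - m) / μ) := by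
    intro i
    rw [hp i, hp0, hkey i]
    field_simp
  have hppos : ∀ i, 0 < p i := by
    intro i
    rw [hp i]; exact div_pos (Real.exp_pos _) hDpos
  have hsumexp : ∑ i, Real.exp ((a i - m) / μ) = m / μ - 1 := by
    have h1 : ∀ i, Real.exp ((a i - m) / μ)
        = Real.exp ((a i - μ) / μ) * Real.exp (1 - m / μ) := by
      intro i
      rw [← Real.exp_add]
      congr 1
      field_simp
      ring
    calc ∑ i, Real.exp ((a i - m) / μ)
        = (∑ i, Real.exp ((a i - μ) / μ)) * Real.exp (1 - m / μ) := by
          rw [Finset.sum_mul]; exact Finset.sum_congr rfl fun i _ => h1 i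
      _ = (m / μ - 1) * (Real.exp (m / μ - 1) * Real.exp (1 - m / μ)) := by
          rw [← hfix]; ring
      _ = m / μ - 1 := by
          rw [← Real.exp_add]; norm_num
  have hsum : (∑ i, p i) / p0 = m / μ - 1 := by
    rw [Finset.sum_div]
    rw [← hsumexp]
    exact Finset.sum_congr rfl fun i _ => hratio i
  refine ⟨hratio, hsum, ?_⟩
  have htot : 1 - ∑ l, p l = p0 := by
    have : (∑ l, p l) + p0 = 1 := by
      have hsump : ∑ l, p l = (∑ l, Real.exp ((u l + c l) / μ)) / D := by
        rw [Finset.sum_div]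
        exact Finset.sum_congr rfl fun l _ => hp l
      rw [hsump, hp0, ← add_div, div_self (ne_of_gt hDpos)]
    linarith
  intro i
  have hlog : Real.log (p i) - Real.log p0 = (a i - m) / μ := by
    rw [← Real.log_div (ne_of_gt (hppos i)) (ne_of_gt hp0pos), hratio i,
      Real.log_exp]
  rw [htot]
  have hdiv : (∑ l, p l) / p0 = m / μ - 1 := hsum
  have h2 : μ * (∑ l, p l) / p0 = μ * (m / μ - 1) := by
    rw [mul_div_assoc, hdiv]
  rw [h2]
  have h3 : μ * Real.log (p i) - μ * Real.log p0 = a i - m := by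
    have := hlog
    field_simp at this ⊢
    linarith
  have h4 : μ * (m / μ - 1) = m - μ := by field_simp
  linarith
end

section
/- Strict concavity of the single-alternative revenue function in probability space: for R a singleton {i}, φ(p) = p·(a − μ·ln p) + μ·p·ln(1 − p) is strictly concave on (0,1), and its unique maximizer p* ∈ (0,1) satisfies a − μ·ln(p*/(1 − p*)) = μ/(1 − p*). -/
open Real Set Filter

noncomputable def saPhi (a μ : ℝ) : ℝ → ℝ :=
  fun p => p * (a - μ * Real.log p) + μ * p * Real.log (1 - p)

noncomputable def saPsi (a μ : ℝ) : ℝ → ℝ :=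
  fun p => a - μ * Real.log p - μ + μ * Real.log (1 - p) - μ * p / (1 - p)

lemma saPhi_hasDerivAt (a μ : ℝ) {p : ℝ} (hp : p ∈ Set.Ioo (0 : ℝ) 1) :
    HasDerivAt (saPhi a μ) (saPsi a μ p) p := by
  have hp0 : p ≠ 0 := ne_of_gt hp.1
  have h1p : (1 : ℝ) - p ≠ 0 := ne_of_gt (by linarith [hp.2])
  have h1 : HasDerivAt (fun q : ℝ => a - μ * Real.log q) (-(μ * p⁻¹)) p :=
    ((Real.hasDerivAt_log hp0).const_mul μ).const_sub a
  have hmul : HasDerivAt (fun q : ℝ => q * (a - μ * Real.log q))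
      (1 * (a - μ * Real.log p) + p * -(μ * p⁻¹)) p := (hasDerivAt_id p).mul h1
  have hlog : HasDerivAt (fun q : ℝ => Real.log (1 - q)) (-1 / (1 - p)) p :=
    ((hasDerivAt_id p).const_sub 1).log h1p
  have h3 : HasDerivAt (fun q : ℝ => μ * q * Real.log (1 - q))
      (μ * 1 * Real.log (1 - p) + μ * p * (-1 / (1 - p))) p :=
    ((hasDerivAt_id p).const_mul μ).mul hlog
  have := hmul.add h3
  refine this.congr_deriv ?_
  simp only [saPsi]
  field_simp
  ring

lemma saPsi_hasDerivAt (a μ : ℝ) {p : ℝ} (hp : p ∈ Set.Ioo (0 : ℝ) 1) :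
    HasDerivAt (saPsi a μ) (-(μ / p) - μ / (1 - p) - μ / (1 - p) ^ 2) p := by
  have hp0 : p ≠ 0 := ne_of_gt hp.1
  have h1ppos : (0 : ℝ) < 1 - p := by linarith [hp.2]
  have h1p : (1 : ℝ) - p ≠ 0 := ne_of_gt h1ppos
  have h1 : HasDerivAt (fun q : ℝ => a - μ * Real.log q - μ) (-(μ * p⁻¹)) p :=
    (((Real.hasDerivAt_log hp0).const_mul μ).const_sub a).sub_const μ
  have hlog : HasDerivAt (fun q : ℝ => Real.log (1 - q)) (-1 / (1 - p)) p :=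
    ((hasDerivAt_id p).const_sub 1).log h1p
  have h2 : HasDerivAt (fun q : ℝ => μ * Real.log (1 - q)) (μ * (-1 / (1 - p))) p :=
    hlog.const_mul μ
  have h4 : HasDerivAt (fun q : ℝ => μ * q / (1 - q))
      ((μ * 1 * (1 - p) - μ * p * (-1)) / (1 - p) ^ 2) p :=
    ((hasDerivAt_id p).const_mul μ).div ((hasDerivAt_id p).const_sub 1) h1p
  have := (h1.add h2).sub h4
  refine this.congr_deriv ?_
  field_simp
  ring

lemma saPsi_deriv_neg (a μ : ℝ) (hμ : 0 < μ) {p : ℝ} (hp : p ∈ Set.Ioo (0 : ℝ) 1) :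
    -(μ / p) - μ / (1 - p) - μ / (1 - p) ^ 2 < 0 := by
  have h1ppos : (0 : ℝ) < 1 - p := by linarith [hp.2]
  have h1 := div_pos hμ hp.1
  have h2 := div_pos hμ h1ppos
  have h3 := div_pos hμ (pow_pos h1ppos 2)
  linarith

lemma saPsi_contOn (a μ : ℝ) : ContinuousOn (saPsi a μ) (Set.Ioo (0 : ℝ) 1) :=
  fun x hx => ((saPsi_hasDerivAt a μ hx).differentiableAt).continuousAt.continuousWithinAt

lemma saPhi_contOn (a μ : ℝ) : ContinuousOn (saPhi a μ) (Set.Ioo (0 : ℝ) 1) :=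
  fun x hx => ((saPhi_hasDerivAt a μ hx).differentiableAt).continuousAt.continuousWithinAt

lemma saPsi_strictAntiOn (a μ : ℝ) (hμ : 0 < μ) :
    StrictAntiOn (saPsi a μ) (Set.Ioo (0 : ℝ) 1) := by
  apply strictAntiOn_of_deriv_neg (convex_Ioo (0:ℝ) 1) (saPsi_contOn a μ)
  intro x hx
  rw [interior_Ioo] at hx
  rw [(saPsi_hasDerivAt a μ hx).deriv]
  exact saPsi_deriv_neg a μ hμ hx

lemma saPhi_strictConcave (a μ : ℝ) (hμ : 0 < μ) :
    StrictConcaveOn ℝ (Set.Ioo (0 : ℝ) 1) (saPhi a μ) := by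
  apply strictConcaveOn_of_deriv2_neg (convex_Ioo (0:ℝ) 1) (saPhi_contOn a μ)
  intro x hx
  rw [interior_Ioo] at hx
  have hev : deriv (saPhi a μ) =ᶠ[nhds x] saPsi a μ :=
    Filter.eventuallyEq_of_mem (isOpen_Ioo.mem_nhds hx)
      (fun y hy => (saPhi_hasDerivAt a μ hy).deriv)
  show deriv (deriv (saPhi a μ)) x < 0
  rw [hev.deriv_eq, (saPsi_hasDerivAt a μ hx).deriv]
  exact saPsi_deriv_neg a μ hμ hx

lemma saPsi_tendsto_zero (a μ : ℝ) (hμ : 0 < μ) :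
    Tendsto (saPsi a μ) (nhdsWithin (0:ℝ) (Set.Ioi 0)) atTop := by
  have heq : saPsi a μ = fun p =>
      (a - μ + μ * Real.log (1 - p) - μ * p / (1 - p)) + -(μ * Real.log p) := by
    funext p; simp [saPsi]; ring
  rw [heq]
  have h1 : Tendsto (fun p : ℝ => -(μ * Real.log p)) (nhdsWithin (0:ℝ) (Set.Ioi 0)) atTop :=
    tendsto_neg_atTop_iff.mpr (Real.tendsto_log_nhdsGT_zero.const_mul_atBot hμ)
  have hc : ContinuousAt (fun p : ℝ => a - μ + μ * Real.log (1 - p) - μ * p / (1 - p)) 0 := by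
    have c1 : ContinuousAt (fun p : ℝ => Real.log (1 - p)) 0 :=
      ((continuous_const.sub continuous_id).continuousAt (x := (0:ℝ))).log (by norm_num)
    have c2 : ContinuousAt (fun p : ℝ => μ * p / (1 - p)) 0 :=
      ((continuous_const.mul continuous_id).continuousAt (x := (0:ℝ))).div
        ((continuous_const.sub continuous_id).continuousAt) (by norm_num)
    exact (continuousAt_const.add (c1.const_mul μ)).sub c2
  have h2 := hc.tendsto.mono_left (nhdsWithin_le_nhds (s := Set.Ioi (0:ℝ)))
  exact h2.add_atTop h1

lemma saPsi_tendsto_one (a μ : ℝ) (hμ : 0 < μ) :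
    Tendsto (saPsi a μ) (nhdsWithin (1:ℝ) (Set.Iio 1)) atBot := by
  have hsub : Tendsto (fun p : ℝ => 1 - p) (nhdsWithin (1:ℝ) (Set.Iio 1))
      (nhdsWithin (0:ℝ) (Set.Ioi 0)) := by
    rw [tendsto_nhdsWithin_iff]
    constructor
    · have : Tendsto (fun p : ℝ => 1 - p) (nhds 1) (nhds (1 - 1)) :=
        (continuous_const.sub continuous_id).tendsto 1
      simpa using this.mono_left nhdsWithin_le_nhds
    · filter_upwards [self_mem_nhdsWithin] with p hp
      exact sub_pos.mpr (Set.mem_Iio.mp hp)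
  have heq : saPsi a μ = fun p =>
      ((a - μ - μ * Real.log p) + μ * Real.log (1 - p)) + -(μ * p * (1 - p)⁻¹) := by
    funext p; simp [saPsi]; ring
  rw [heq]
  have h1 : Tendsto (fun p : ℝ => μ * Real.log (1 - p)) (nhdsWithin (1:ℝ) (Set.Iio 1)) atBot :=
    (Real.tendsto_log_nhdsGT_zero.comp hsub).const_mul_atBot hμ
  have hc : ContinuousAt (fun p : ℝ => a - μ - μ * Real.log p) 1 :=
    continuousAt_const.sub ((Real.continuousAt_log (by norm_num)).const_mul μ)
  have h2 := hc.tendsto.mono_left (nhdsWithin_le_nhds (s := Set.Iio (1:ℝ)))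
  have h3 : Tendsto (fun p : ℝ => μ * p * (1 - p)⁻¹) (nhdsWithin (1:ℝ) (Set.Iio 1)) atTop := by
    apply Filter.Tendsto.pos_mul_atTop hμ
    · have : Tendsto (fun p : ℝ => μ * p) (nhds 1) (nhds (μ * 1)) :=
        (continuous_const.mul continuous_id).tendsto 1
      simpa using this.mono_left nhdsWithin_le_nhds
    · exact tendsto_inv_nhdsGT_zero.comp hsub
  exact Filter.Tendsto.atBot_add_atBot (h2.add_atBot h1) (tendsto_neg_atBot_iff.mpr h3)

/-- strict concavity of the single-alternative objective
    φ(p) = p(a − μ ln p) + μ p ln(1 − p) on (0,1), and its unique maximizer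
    p* satisfies a − μ ln(p*/(1 − p*)) = μ/(1 − p*). -/
theorem single_alternative_strict_concavity
    (a μ : ℝ) (hμ : 0 < μ) :
    StrictConcaveOn ℝ (Set.Ioo (0 : ℝ) 1)
      (fun p => p * (a - μ * Real.log p) + μ * p * Real.log (1 - p)) ∧
    ∃ p ∈ Set.Ioo (0 : ℝ) 1,
      IsMaxOn (fun p => p * (a - μ * Real.log p) + μ * p * Real.log (1 - p))
        (Set.Ioo (0 : ℝ) 1) p ∧
      a - μ * Real.log (p / (1 - p)) = μ / (1 - p) ∧
      ∀ q ∈ Set.Ioo (0 : ℝ) 1,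
        IsMaxOn (fun p => p * (a - μ * Real.log p) + μ * p * Real.log (1 - p))
          (Set.Ioo (0 : ℝ) 1) q → q = p := by
  have hconc := saPhi_strictConcave a μ hμ
  -- find p₁ with ψ p₁ > 0 and p₂ with ψ p₂ < 0
  have hpos : ∃ p₁ ∈ Set.Ioo (0:ℝ) 1, 0 < saPsi a μ p₁ := by
    have h := (saPsi_tendsto_zero a μ hμ).eventually_gt_atTop 0
    have hmem : Set.Ioo (0:ℝ) 1 ∈ nhdsWithin (0:ℝ) (Set.Ioi 0) :=
      Ioo_mem_nhdsGT one_pos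
    rcases (h.and (eventually_of_mem hmem (fun x hx => hx))).exists with ⟨p₁, h1, h2⟩
    exact ⟨p₁, h2, h1⟩
  have hneg : ∃ p₂ ∈ Set.Ioo (0:ℝ) 1, saPsi a μ p₂ < 0 := by
    have h := (saPsi_tendsto_one a μ hμ).eventually_lt_atBot 0
    have hmem : Set.Ioo (0:ℝ) 1 ∈ nhdsWithin (1:ℝ) (Set.Iio 1) :=
      Ioo_mem_nhdsLT one_pos
    rcases (h.and (eventually_of_mem hmem (fun x hx => hx))).exists with ⟨p₂, h1, h2⟩
    exact ⟨p₂, h2, h1⟩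
  obtain ⟨p₁, hp₁, hψ₁⟩ := hpos
  obtain ⟨p₂, hp₂, hψ₂⟩ := hneg
  have hanti := saPsi_strictAntiOn a μ hμ
  have hlt : p₁ < p₂ := by
    by_contra h
    push_neg at h
    rcases eq_or_lt_of_le h with heq | hlt'
    · rw [heq] at hψ₂; linarith
    · have := hanti hp₂ hp₁ hlt'; linarith
  -- IVT to find the critical point
  have hsub : Set.Icc p₁ p₂ ⊆ Set.Ioo (0:ℝ) 1 := fun x hx =>
    ⟨lt_of_lt_of_le hp₁.1 hx.1, lt_of_le_of_lt hx.2 hp₂.2⟩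
  have hivt := intermediate_value_Icc' (le_of_lt hlt) ((saPsi_contOn a μ).mono hsub)
  have h0mem : (0:ℝ) ∈ Set.Icc (saPsi a μ p₂) (saPsi a μ p₁) := ⟨le_of_lt hψ₂, le_of_lt hψ₁⟩
  obtain ⟨p, hpIcc, hψp⟩ := hivt h0mem
  have hpI : p ∈ Set.Ioo (0:ℝ) 1 := hsub hpIcc
  have h1ppos : (0:ℝ) < 1 - p := by linarith [hpI.2]
  have h1p : (1:ℝ) - p ≠ 0 := ne_of_gt h1ppos
  -- the maximizer property: φ increasing to the left of p, decreasing to the right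
  have hmax : IsMaxOn (saPhi a μ) (Set.Ioo (0:ℝ) 1) p := by
    intro q hq
    simp only [Set.mem_setOf_eq]
    rcases lt_trichotomy q p with hqp | hqp | hqp
    · -- φ strictly increasing on [q, p]
      have hsub' : Set.Icc q p ⊆ Set.Ioo (0:ℝ) 1 := fun x hx =>
        ⟨lt_of_lt_of_le hq.1 hx.1, lt_of_le_of_lt hx.2 hpI.2⟩
      have hmono : StrictMonoOn (saPhi a μ) (Set.Icc q p) := by
        apply strictMonoOn_of_deriv_pos (convex_Icc q p) ((saPhi_contOn a μ).mono hsub')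
        intro x hx
        rw [interior_Icc] at hx
        have hxI : x ∈ Set.Ioo (0:ℝ) 1 := hsub' ⟨le_of_lt hx.1, le_of_lt hx.2⟩
        rw [(saPhi_hasDerivAt a μ hxI).deriv]
        have := hanti hxI hpI hx.2
        rw [hψp] at this
        linarith
      exact le_of_lt (hmono (Set.left_mem_Icc.mpr (le_of_lt hqp))
        (Set.right_mem_Icc.mpr (le_of_lt hqp)) hqp)
    · rw [hqp]
    · -- φ strictly decreasing on [p, q]
      have hsub' : Set.Icc p q ⊆ Set.Ioo (0:ℝ) 1 := fun x hx =>
        ⟨lt_of_lt_of_le hpI.1 hx.1, lt_of_le_of_lt hx.2 hq.2⟩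
      have hmono : StrictAntiOn (saPhi a μ) (Set.Icc p q) := by
        apply strictAntiOn_of_deriv_neg (convex_Icc p q) ((saPhi_contOn a μ).mono hsub')
        intro x hx
        rw [interior_Icc] at hx
        have hxI : x ∈ Set.Ioo (0:ℝ) 1 := hsub' ⟨le_of_lt hx.1, le_of_lt hx.2⟩
        rw [(saPhi_hasDerivAt a μ hxI).deriv]
        have := hanti hpI hxI hx.1
        rw [hψp] at this
        linarith
      exact le_of_lt (hmono (Set.left_mem_Icc.mpr (le_of_lt hqp))
        (Set.right_mem_Icc.mpr (le_of_lt hqp)) hqp)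
  refine ⟨hconc, p, hpI, hmax, ?_, ?_⟩
  · -- the first-order condition
    have hp0 : p ≠ 0 := ne_of_gt hpI.1
    rw [Real.log_div hp0 h1p]
    have h := hψp
    simp only [saPsi] at h
    have h2 : a - μ * (Real.log p - Real.log (1 - p)) = μ + μ * p / (1 - p) := by
      linear_combination h
    rw [h2]
    field_simp
    ring
  · -- uniqueness
    intro q hq hqmax
    by_contra hne
    have hfq : saPhi a μ q = saPhi a μ p := le_antisymm (hmax hq) (hqmax hpI)
    have hmid := hconc.2 hq hpI hne (by norm_num : (0:ℝ) < 1/2)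
      (by norm_num : (0:ℝ) < 1/2) (by norm_num)
    have hmidmem : (1/2 : ℝ) • q + (1/2 : ℝ) • p ∈ Set.Ioo (0:ℝ) 1 :=
      hconc.1 hq hpI (by norm_num) (by norm_num) (by norm_num)
    have := hmax hmidmem
    simp only [Set.mem_setOf_eq] at this
    rw [hfq] at hmid
    have : saPhi a μ ((1/2 : ℝ) • q + (1/2 : ℝ) • p) ≤ saPhi a μ p := this
    have h2 : (1/2 : ℝ) • saPhi a μ p + (1/2 : ℝ) • saPhi a μ p = saPhi a μ p := by
      simp [smul_eq_mul]; ring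
    rw [h2] at hmid
    linarith
end
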